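/- Let Γ be a countable group acting on a countable set I, let X₀ be a standard Borel space and μ₀ a probability measure on X₀ that is non-trivial, i.e., there is a measurable set A ⊆ X₀ with 0 < μ₀(A) < 1. Let μ = μ₀^{⊗I} be the product probability measure on X₀^I. If g ∈ Γ is such that the set {i ∈ I : g·i ≠ i} is infinite, then the set {x ∈ X₀^I : x(g⁻¹·i) = x(i) for all i ∈ I} of points of X₀^I fixed by the generalized Bernoulli shift T_g is μ-null. -/

import Mathlib

open MeasureTheory

/-- For the generalized Bernoulli action of a countable group `Γ` on `X₀^I` built from a
non-trivial probability space `(X₀, μ₀)`, any group element `g` moving infinitely many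
`i ∈ I` has a `μ`-null fixed-point set, where `μ = μ₀^{⊗ I}` is the product probability
measure (characterized by its values on measurable cylinder sets). -/
theorem stmt2 {Γ I X₀ : Type*} [Group Γ] [MulAction Γ I] [Countable Γ] [Countable I]
    [MeasurableSpace X₀] [StandardBorelSpace X₀]
    (μ₀ : Measure X₀) [IsProbabilityMeasure μ₀]
    (hμ₀ : ∃ A : Set X₀, MeasurableSet A ∧ 0 < μ₀ A ∧ μ₀ A < 1)
    (μ : Measure (I → X₀)) [IsProbabilityMeasure μ]
    (hμ : ∀ (s : Finset I) (f : I → Set X₀), (∀ i, MeasurableSet (f i)) →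
      μ {x : I → X₀ | ∀ i ∈ s, x i ∈ f i} = ∏ i ∈ s, μ₀ (f i))
    (g : Γ) (hg : {i : I | g • i ≠ i}.Infinite) :
    μ {x : I → X₀ | ∀ i : I, x (g⁻¹ • i) = x i} = 0 := by
  classical
  obtain ⟨A, hA, hA0, hA1⟩ := hμ₀
  -- families of disjoint moved pairs
  have hpairs : ∀ n : ℕ, ∃ p : Fin n → I, (∀ k, g⁻¹ • p k ≠ p k) ∧
      (∀ k l, k ≠ l → p k ≠ p l ∧ p k ≠ g⁻¹ • p l ∧ g⁻¹ • p k ≠ p l) := by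
    intro n
    induction n with
    | zero => exact ⟨Fin.elim0, fun k => k.elim0, fun k => k.elim0⟩
    | succ n ih =>
      obtain ⟨p, hp1, hp2⟩ := ih
      have hfin : (⋃ k : Fin n, ({p k, g⁻¹ • p k, g • p k} : Set I)).Finite := by
        apply Set.finite_iUnion
        intro k
        exact (Set.finite_singleton _).insert _ |>.insert _
      obtain ⟨i, hiS, hiT⟩ := (hg.diff hfin).nonempty
      have hiT' : ∀ k : Fin n, i ≠ p k ∧ i ≠ g⁻¹ • p k ∧ i ≠ g • p k := by
        intro k
        have : i ∉ ({p k, g⁻¹ • p k, g • p k} : Set I) := fun h =>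
          hiT (Set.mem_iUnion.2 ⟨k, h⟩)
        simp only [Set.mem_insert_iff, Set.mem_singleton_iff, not_or] at this
        exact this
      have hiMoved : g⁻¹ • i ≠ i := by
        intro h
        apply hiS
        have := congrArg (g • ·) h
        simpa using this.symm
      refine ⟨Fin.snoc p i, ?_, ?_⟩
      · intro k
        rcases Fin.eq_castSucc_or_eq_last k with ⟨k', rfl⟩ | rfl
        · simpa using hp1 k'
        · simpa using hiMoved
      · intro k l hkl
        rcases Fin.eq_castSucc_or_eq_last k with ⟨k', rfl⟩ | rfl <;>
          rcases Fin.eq_castSucc_or_eq_last l with ⟨l', rfl⟩ | rfl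
        · have hkl' : k' ≠ l' := fun h => hkl (by rw [h])
          simpa using hp2 k' l' hkl'
        · simp only [Fin.snoc_last, Fin.snoc_castSucc]
          obtain ⟨h1, h2, h3⟩ := hiT' k'
          refine ⟨fun h => h1 h.symm, fun h => ?_, fun h => h2 h.symm⟩
          apply h3
          have := congrArg (g • ·) h
          simpa using this.symm
        · simp only [Fin.snoc_last, Fin.snoc_castSucc]
          obtain ⟨h1, h2, h3⟩ := hiT' l'
          refine ⟨h1, h2, fun h => ?_⟩
          apply h3
          have := congrArg (g • ·) h
          simpa using this
        · exact absurd rfl hkl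
  -- notation
  set a : ENNReal := μ₀ A with ha
  set b : ENNReal := μ₀ Aᶜ with hb
  set r : ENNReal := a ^ 2 + b ^ 2 with hr
  have hab : a + b = 1 := prob_add_prob_compl hA
  have haT : a ≠ ⊤ := (measure_lt_top μ₀ A).ne
  have hbT : b ≠ ⊤ := (measure_lt_top μ₀ Aᶜ).ne
  have hb0 : b ≠ 0 := by
    intro h
    rw [h, add_zero] at hab
    exact hA1.ne hab
  have hb1 : b < 1 := by
    have : a ≠ 0 := hA0.ne'
    calc b = 0 + b := (zero_add b).symm
    _ < a + b := by exact ENNReal.add_lt_add_right hbT (pos_iff_ne_zero.2 this)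
    _ = 1 := hab
  have hr1 : r < 1 := by
    have h1 : a ^ 2 < a := by
      rw [sq]
      calc a * a < 1 * a := (ENNReal.mul_lt_mul_iff_left hA0.ne' haT).2 hA1
      _ = a := one_mul a
    have h2 : b ^ 2 < b := by
      rw [sq]
      calc b * b < 1 * b := (ENNReal.mul_lt_mul_iff_left hb0 hbT).2 hb1
      _ = b := one_mul b
    calc r < a + b := ENNReal.add_lt_add h1 h2
    _ = 1 := hab
  -- key bound
  have key : ∀ n : ℕ, μ {x : I → X₀ | ∀ i : I, x (g⁻¹ • i) = x i} ≤ r ^ n := by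
    intro n
    obtain ⟨p, hp1, hp2⟩ := hpairs n
    set B : Bool → Set X₀ := fun c => if c then A else Aᶜ with hB
    have hBm : ∀ c, MeasurableSet (B c) := by
      intro c; cases c <;> simp [hB, hA, hA.compl]
    set f : (Fin n → Bool) → I → Set X₀ :=
      fun ε i => ⋂ k, ⋂ (_ : i = p k ∨ i = g⁻¹ • p k), B (ε k) with hf
    have hfm : ∀ ε i, MeasurableSet (f ε i) := fun ε i =>
      MeasurableSet.iInter fun k => MeasurableSet.iInter fun _ => hBm _
    have hfval : ∀ (ε : Fin n → Bool) (k : Fin n) (j : I),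
        (j = p k ∨ j = g⁻¹ • p k) → f ε j = B (ε k) := by
      intro ε k j hj
      apply subset_antisymm
      · exact Set.iInter₂_subset k hj
      · intro y hy
        simp only [hf, Set.mem_iInter]
        intro l hl
        rcases eq_or_ne k l with rfl | hkl
        · exact hy
        · exfalso
          obtain ⟨d1, d2, d3⟩ := hp2 k l hkl
          rcases hj with rfl | rfl <;> rcases hl with h | h
          · exact d1 h
          · exact d2 h
          · exact d3 h
          · exact d1 (smul_left_cancel _ h)
    set s : Finset I := Finset.univ.biUnion (fun k => {p k, g⁻¹ • p k}) with hs
    -- the fixed set is contained in the union of cylinders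
    have hsub : {x : I → X₀ | ∀ i : I, x (g⁻¹ • i) = x i} ⊆
        ⋃ ε : Fin n → Bool, {x : I → X₀ | ∀ i ∈ s, x i ∈ f ε i} := by
      intro x hx
      refine Set.mem_iUnion.2 ⟨fun k => decide (x (p k) ∈ A), ?_⟩
      intro i _
      simp only [hf, Set.mem_iInter]
      intro k hk
      have hxx : x i = x (p k) := by
        rcases hk with rfl | rfl
        · rfl
        · exact hx (p k)
      rw [hxx]
      by_cases hmem : x (p k) ∈ A <;> simp [hB, hmem]
    -- measure of each cylinder
    have hcyl : ∀ ε : Fin n → Bool,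
        μ {x : I → X₀ | ∀ i ∈ s, x i ∈ f ε i} = ∏ k : Fin n, μ₀ (B (ε k)) ^ 2 := by
      intro ε
      rw [hμ s (f ε) (hfm ε)]
      have hdisj : (↑(Finset.univ : Finset (Fin n)) : Set (Fin n)).Pairwise
          (Function.onFun Disjoint (fun k => ({p k, g⁻¹ • p k} : Finset I))) := by
        intro k _ l hl hkl
        simp only [Function.onFun, Finset.disjoint_left]
        intro j hj hj'
        simp only [Finset.mem_insert, Finset.mem_singleton] at hj hj'
        obtain ⟨d1, d2, d3⟩ := hp2 k l hkl
        rcases hj with rfl | rfl <;> rcases hj' with h | h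
        · exact d1 h
        · exact d2 h
        · exact d3 h
        · exact d1 (smul_left_cancel _ h)
      rw [hs, Finset.prod_biUnion hdisj]
      apply Finset.prod_congr rfl
      intro k _
      rw [Finset.prod_pair (hp1 k).symm, hfval ε k _ (Or.inl rfl),
        hfval ε k _ (Or.inr rfl), sq]
    calc μ {x : I → X₀ | ∀ i : I, x (g⁻¹ • i) = x i}
        ≤ μ (⋃ ε : Fin n → Bool, {x : I → X₀ | ∀ i ∈ s, x i ∈ f ε i}) := measure_mono hsub
      _ ≤ ∑' ε : Fin n → Bool, μ {x : I → X₀ | ∀ i ∈ s, x i ∈ f ε i} := measure_iUnion_le _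
      _ = ∑ ε : Fin n → Bool, μ {x : I → X₀ | ∀ i ∈ s, x i ∈ f ε i} := tsum_fintype _
      _ = ∑ ε : Fin n → Bool, ∏ k : Fin n, μ₀ (B (ε k)) ^ 2 :=
          Finset.sum_congr rfl fun ε _ => hcyl ε
      _ = ∏ k : Fin n, ∑ c : Bool, μ₀ (B c) ^ 2 := by
          rw [Finset.prod_univ_sum]
          rw [Fintype.piFinset_univ]
      _ = r ^ n := by
          have : ∑ c : Bool, μ₀ (B c) ^ 2 = r := by
            simp [hB, hr, ha, hb, add_comm]
          rw [this, Finset.prod_const, Finset.card_univ, Fintype.card_fin]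
  -- conclude
  have htend : Filter.Tendsto (fun n : ℕ => r ^ n) Filter.atTop (nhds 0) :=
    ENNReal.tendsto_pow_atTop_nhds_zero_of_lt_one hr1
  have hle : μ {x : I → X₀ | ∀ i : I, x (g⁻¹ • i) = x i} ≤ 0 :=
    ge_of_tendsto' htend key
  exact le_antisymm hle zero_le
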